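/- Let a, b be nonzero integers such that −ab is not a perfect square, and let ε ∈ {1, −1}. Then X, Y ∈ M₂(ℤ) satisfy aX² + bY² = εI and XY = YX if and only if one of the following holds: (i) X = t₁I and Y = t₂I for integers t₁, t₂ with a·t₁² + b·t₂² = ε; (ii) X = t₁I and Y = [[t₄, t₂],[t₃, −t₄]] for integers t₁, t₂, t₃, t₄ with a·t₁² + b(t₄² + t₂t₃) = ε; (iii) there exist integers t₁, t₂, t₃, t₄, u, v with u ≠ ε, g = gcd(va, u − ε), such that X = [[t₁, ((u−ε)/g)·t₂],[((u−ε)/g)·t₃, ε(u·t₁ + v·b·t₄)]], Y = [[t₄, (va/g)·t₂],[(va/g)·t₃, ε(v·a·t₁ − u·t₄)]], and the relations u² + abv² = 1 and g²(a·t₁² + b·t₄²) + 2a·t₂t₃·(1 − εu) = ε·g² hold. -/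

import Mathlib

lemma prim (p q : ℤ) (h : p ≠ 0 ∨ q ≠ 0) :
    ∃ k m d : ℤ, d ≠ 0 ∧ Int.gcd k m = 1 ∧ p = d * k ∧ q = d * m := by
  have hd : Int.gcd p q ≠ 0 := by
    intro hc
    rw [Int.gcd_eq_zero_iff] at hc
    rcases h with h | h
    · exact h hc.1
    · exact h hc.2
  set d : ℤ := (Int.gcd p q : ℤ) with hdd
  have hd0 : d ≠ 0 := by
    simpa [hdd] using Int.natCast_ne_zero.mpr hd
  obtain ⟨k, hk⟩ : d ∣ p := Int.gcd_dvd_left p q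
  obtain ⟨m, hm⟩ : d ∣ q := Int.gcd_dvd_right p q
  refine ⟨k, m, d, hd0, ?_, hk, hm⟩
  have hgg := Int.gcd_div_gcd_div_gcd (i := p) (j := q) (Nat.pos_of_ne_zero hd)
  have hk' : k = p / d := by
    rw [hk, Int.mul_ediv_cancel_left _ hd0]
  have hm' : m = q / d := by
    rw [hm, Int.mul_ediv_cancel_left _ hd0]
  rw [hk', hm']
  exact hgg

lemma factor (k m x y : ℤ) (hkm : Int.gcd k m = 1) (h : k * y = m * x) :
    ∃ t : ℤ, x = k * t ∧ y = m * t := by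
  have hco : IsCoprime k m := Int.isCoprime_iff_gcd_eq_one.mpr hkm
  by_cases hk : k = 0
  · subst hk
    have hm : m = 1 ∨ m = -1 := by
      simp [Int.gcd] at hkm
      rcases Int.natAbs_eq m with h' | h' <;> rw [hkm] at h' <;> [left; right] <;> omega
    have hx : x = 0 := by
      rcases hm with hm | hm <;> subst hm <;> simpa using h.symm
    refine ⟨m * y, by simp [hx], ?_⟩
    rcases hm with hm | hm <;> subst hm <;> ring
  · have hdvd : k ∣ x := by
      have : k ∣ m * x := ⟨y, h.symm⟩
      exact hco.dvd_of_dvd_mul_left this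
    obtain ⟨t, ht⟩ := hdvd
    refine ⟨t, ht, ?_⟩
    have : k * y = k * (m * t) := by rw [h, ht]; ring
    exact mul_left_cancel₀ hk this

lemma Sne (a b k m : ℤ) (ha : a ≠ 0) (hb : b ≠ 0)
    (hnsq : ¬ ∃ s : ℤ, -(a * b) = s ^ 2) (hkm : Int.gcd k m = 1) :
    a * k ^ 2 + b * m ^ 2 ≠ 0 := by
  intro hS
  by_cases hk : k = 0
  · subst hk
    have hm2 : m ^ 2 = 0 := by
      apply mul_left_cancel₀ hb
      linear_combination hS
    have hm : m = 0 := by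
      exact pow_eq_zero_iff two_ne_zero |>.mp hm2
    subst hm
    simp [Int.gcd] at hkm
  · have h1 : (b * m) ^ 2 = k ^ 2 * (-(a * b)) := by linear_combination b * hS
    have hdvd : k ∣ b * m := by
      have h2 : k ^ 2 ∣ (b * m) ^ 2 := ⟨-(a * b), h1⟩
      exact (Int.pow_dvd_pow_iff two_ne_zero).mp h2
    obtain ⟨s, hs⟩ := hdvd
    apply hnsq
    refine ⟨s, ?_⟩
    have hk2 : k ^ 2 ≠ 0 := pow_ne_zero 2 hk
    apply mul_left_cancel₀ hk2
    rw [hs] at h1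
    linear_combination -h1

lemma core (a b ε : ℤ) (ha : a ≠ 0) (hb : b ≠ 0)
    (hnsq : ¬ ∃ s : ℤ, -(a * b) = s ^ 2) (hε2 : ε * ε = 1)
    (x1 x2 x3 x4 y1 y2 y3 y4 : ℤ)
    (hns : ¬(x2 = 0 ∧ x3 = 0 ∧ x1 = x4))
    (h2 : x2 ≠ 0 ∨ y2 ≠ 0)
    (e11 : a*(x1*x1 + x2*x3) + b*(y1*y1 + y2*y3) = ε)
    (e12 : a*(x1*x2 + x2*x4) + b*(y1*y2 + y2*y4) = 0)
    (c11 : x2*y3 = y2*x3)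
    (c12 : x1*y2 + x2*y4 = y1*x2 + y2*x4) :
    ∃ t1 t2 t3 t4 u v g : ℤ, u ≠ ε ∧ g = Int.gcd (v*a) (u-ε) ∧
      x1 = t1 ∧ x2 = ((u-ε)/g)*t2 ∧ x3 = ((u-ε)/g)*t3 ∧ x4 = ε*(u*t1 + v*b*t4) ∧
      y1 = t4 ∧ y2 = (v*a/g)*t2 ∧ y3 = (v*a/g)*t3 ∧ y4 = ε*(v*a*t1 - u*t4) ∧
      u^2 + a*b*v^2 = 1 ∧
      g^2*(a*t1^2 + b*t4^2) + 2*a*t2*t3*(1 - ε*u) = ε*g^2 := by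
  obtain ⟨k, m, d, hd0, hkm, hx2, hy2⟩ := prim x2 y2 h2
  subst hx2; subst hy2
  have hky : k * y3 = m * x3 := by
    apply mul_left_cancel₀ hd0
    linear_combination c11
  obtain ⟨t3, hx3, hy3⟩ := factor k m x3 y3 hkm hky
  subst hx3; subst hy3
  have hSne : (a*k^2 + b*m^2) ≠ 0 := Sne a b k m ha hb hnsq hkm
  have P1 : a*k*(x1+x4) + b*m*(y1+y4) = 0 := by
    apply mul_left_cancel₀ hd0
    linear_combination e12
  have P2 : k*(y4-y1) - m*(x4-x1) = 0 := by
    apply mul_left_cancel₀ hd0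
    linear_combination c12
  have R1 : (a*k^2 + b*m^2)*x4 + (a*k^2 - b*m^2)*x1 + 2*b*k*m*y1 = 0 := by
    linear_combination k*P1 - b*m*P2
  have R2 : (a*k^2 + b*m^2)*y4 - (a*k^2 - b*m^2)*y1 + 2*a*k*m*x1 = 0 := by
    linear_combination m*P1 + a*k*P2
  have R3 : a*x1^2 + b*y1^2 + d*t3*(a*k^2 + b*m^2) = ε := by
    linear_combination e11
  have K1 : (a*k^2 + b*m^2)*(a*x1*x4 - b*y1*y4 - (a*k^2 - b*m^2)*d*t3) = -ε*(a*k^2 - b*m^2) := by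
    linear_combination (a*x1)*R1 - (b*y1)*R2 - (a*k^2 - b*m^2)*R3
  have K2 : (a*k^2 + b*m^2)*(x1*y4 + x4*y1 - 2*k*m*d*t3) = -ε*(2*k*m) := by
    linear_combination x1*R2 + y1*R1 - (2*k*m)*R3
  have hu2 : (a*x1*x4 - b*y1*y4 - (a*k^2 - b*m^2)*d*t3)^2 + a*b*(x1*y4 + x4*y1 - 2*k*m*d*t3)^2 = 1 := by
    apply mul_left_cancel₀ (pow_ne_zero 2 hSne)
    linear_combination ((a*k^2 + b*m^2)*(a*x1*x4 - b*y1*y4 - (a*k^2 - b*m^2)*d*t3) - ε*(a*k^2 - b*m^2))*K1 + a*b*((a*k^2 + b*m^2)*(x1*y4 + x4*y1 - 2*k*m*d*t3) - ε*(2*k*m))*K2 + ((a*k^2 - b*m^2)^2 + a*b*(2*k*m)^2)*hε2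
  have hx4e : x4 = ε*((a*x1*x4 - b*y1*y4 - (a*k^2 - b*m^2)*d*t3)*x1 + (x1*y4 + x4*y1 - 2*k*m*d*t3)*b*y1) := by
    apply mul_left_cancel₀ hSne
    linear_combination (-(ε*x1))*K1 + (-(ε*b*y1))*K2 + R1 + ((a*k^2 - b*m^2)*x1 + b*(2*k*m)*y1)*hε2
  have hy4e : y4 = ε*((x1*y4 + x4*y1 - 2*k*m*d*t3)*a*x1 - (a*x1*x4 - b*y1*y4 - (a*k^2 - b*m^2)*d*t3)*y1) := by
    apply mul_left_cancel₀ hSne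
    linear_combination (ε*y1)*K1 + (-(ε*a*x1))*K2 + R2 + (a*(2*k*m)*x1 - (a*k^2 - b*m^2)*y1)*hε2
  have hune : (a*x1*x4 - b*y1*y4 - (a*k^2 - b*m^2)*d*t3) ≠ ε := by
    intro h
    rw [h] at K1
    have h2ak : 2*a*k^2 = 0 := by
      linear_combination ε*K1 - ((a*k^2 + b*m^2) + (a*k^2 - b*m^2))*hε2
    have hk2 : k = 0 := by
      have hkk : k^2 = 0 := by
        apply mul_left_cancel₀ (mul_ne_zero two_ne_zero ha)
        linear_combination h2ak
      exact pow_eq_zero_iff two_ne_zero |>.mp hkk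
    have hv0 : (x1*y4 + x4*y1 - 2*k*m*d*t3) = 0 := by
      apply mul_left_cancel₀ hSne
      linear_combination K2 - 2*ε*m*hk2
    have hx41 : x1 = x4 := by
      rw [hx4e, h, hv0]
      linear_combination (-x1)*hε2
    exact hns ⟨by rw [hk2]; ring, by rw [hk2]; ring, hx41⟩
  have hprop : k * ((x1*y4 + x4*y1 - 2*k*m*d*t3)*a) = m * ((a*x1*x4 - b*y1*y4 - (a*k^2 - b*m^2)*d*t3) - ε) := by
    apply mul_left_cancel₀ hSne
    linear_combination (a*k)*K2 - m*K1
  obtain ⟨c, hc1, hc2⟩ := factor k m ((a*x1*x4 - b*y1*y4 - (a*k^2 - b*m^2)*d*t3) - ε) ((x1*y4 + x4*y1 - 2*k*m*d*t3)*a) hkm hprop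
  have hcne : c ≠ 0 := by
    intro h0
    apply hune
    have : (a*x1*x4 - b*y1*y4 - (a*k^2 - b*m^2)*d*t3) - ε = 0 := by rw [hc1, h0, mul_zero]
    linarith
  have hkne : k ≠ 0 := by
    intro h0
    apply hune
    have : (a*x1*x4 - b*y1*y4 - (a*k^2 - b*m^2)*d*t3) - ε = 0 := by rw [hc1, h0, zero_mul]
    linarith
  have hsc : (a*k^2 + b*m^2)*c = -2*ε*a*k := by
    apply mul_left_cancel₀ hkne
    linear_combination (-(a*k^2 + b*m^2))*hc1 + K1
  have hgne : ((c.natAbs : ℤ)) ≠ 0 := by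
    simpa using hcne
  have hgval : Int.gcd ((x1*y4 + x4*y1 - 2*k*m*d*t3)*a) ((a*x1*x4 - b*y1*y4 - (a*k^2 - b*m^2)*d*t3)-ε) = c.natAbs := by
    rw [hc2, hc1, mul_comm m c, mul_comm k c, Int.gcd_mul_left, Int.gcd_comm m k, hkm, mul_one]
  have hsign : c.sign * c.sign = 1 := by
    rcases lt_trichotomy c 0 with h1 | h1 | h1
    · rw [Int.sign_eq_neg_one_of_neg h1]; norm_num
    · exact absurd h1 hcne
    · rw [Int.sign_eq_one_of_pos h1]; norm_num
  have hcq : k*c = (c.natAbs:ℤ)*(c.sign*k) := by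
    linear_combination (-k)*(Int.sign_mul_natAbs c)
  have hcq2 : m*c = (c.natAbs:ℤ)*(c.sign*m) := by
    linear_combination (-m)*(Int.sign_mul_natAbs c)
  have hgd : ((a*x1*x4 - b*y1*y4 - (a*k^2 - b*m^2)*d*t3) - ε)/((c.natAbs:ℤ)) = c.sign * k := by
    rw [hc1, hcq, Int.mul_ediv_cancel_left _ hgne]
  have hgd2 : ((x1*y4 + x4*y1 - 2*k*m*d*t3)*a)/((c.natAbs:ℤ)) = c.sign * m := by
    rw [hc2, hcq2, Int.mul_ediv_cancel_left _ hgne]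
  have hsq : (a*k^2 + b*m^2)^2*c^2 = 4*a^2*k^2 := by
    linear_combination ((a*k^2 + b*m^2)*c - 2*ε*a*k)*hsc + 4*a^2*k^2*hε2
  have hSA : (a*k^2 + b*m^2)*(1 - ε*(a*x1*x4 - b*y1*y4 - (a*k^2 - b*m^2)*d*t3)) = 2*a*k^2 := by
    linear_combination (-ε)*K1 + (a*k^2 - b*m^2)*hε2
  refine ⟨x1, c.sign*d, c.sign*t3, y1, (a*x1*x4 - b*y1*y4 - (a*k^2 - b*m^2)*d*t3), (x1*y4 + x4*y1 - 2*k*m*d*t3), (c.natAbs:ℤ), hune, by rw [hgval], rfl, ?_, ?_, hx4e, rfl, ?_, ?_, hy4e, hu2, ?_⟩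
  · rw [hgd]; linear_combination (-(d*k))*hsign
  · rw [hgd]; linear_combination (-(t3*k))*hsign
  · rw [hgd2]; linear_combination (-(d*m))*hsign
  · rw [hgd2]; linear_combination (-(t3*m))*hsign
  · have hg2 : ((c.natAbs:ℤ))^2 = c^2 := by
      rw [Int.natAbs_sq]
    rw [hg2]
    have key : c^2*(a*x1^2 + b*y1^2) + 2*a*d*t3*(1 - ε*(a*x1*x4 - b*y1*y4 - (a*k^2 - b*m^2)*d*t3)) = ε*c^2 := by
      apply mul_left_cancel₀ (pow_ne_zero 2 hSne)
      linear_combination ((a*x1^2 + b*y1^2) - ε)*hsq + (2*a*d*t3*(a*k^2 + b*m^2))*hSA + (4*a^2*k^2)*R3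
    linear_combination key + (2*a*d*t3*(1 - ε*(a*x1*x4 - b*y1*y4 - (a*k^2 - b*m^2)*d*t3)))*hsign


set_option maxHeartbeats 1000000 in
theorem stmt_15 (a b : ℤ) (ha : a ≠ 0) (hb : b ≠ 0)
    (hnsq : ¬ ∃ s : ℤ, -(a * b) = s ^ 2) (ε : ℤ) (hε : ε = 1 ∨ ε = -1)
    (X Y : Matrix (Fin 2) (Fin 2) ℤ) :
    (a • X ^ 2 + b • Y ^ 2 = ε • (1 : Matrix (Fin 2) (Fin 2) ℤ) ∧ X * Y = Y * X) ↔
    ((∃ t₁ t₂ : ℤ, X = t₁ • (1 : Matrix (Fin 2) (Fin 2) ℤ) ∧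
        Y = t₂ • (1 : Matrix (Fin 2) (Fin 2) ℤ) ∧ a * t₁ ^ 2 + b * t₂ ^ 2 = ε) ∨
     (∃ t₁ t₂ t₃ t₄ : ℤ, X = t₁ • (1 : Matrix (Fin 2) (Fin 2) ℤ) ∧
        Y = !![t₄, t₂; t₃, -t₄] ∧ a * t₁ ^ 2 + b * (t₄ ^ 2 + t₂ * t₃) = ε) ∨
     (∃ t₁ t₂ t₃ t₄ u v g : ℤ, u ≠ ε ∧ g = Int.gcd (v * a) (u - ε) ∧
        X = !![t₁, ((u - ε) / g) * t₂; ((u - ε) / g) * t₃, ε * (u * t₁ + v * b * t₄)] ∧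
        Y = !![t₄, (v * a / g) * t₂; (v * a / g) * t₃, ε * (v * a * t₁ - u * t₄)] ∧
        u ^ 2 + a * b * v ^ 2 = 1 ∧
        g ^ 2 * (a * t₁ ^ 2 + b * t₄ ^ 2) + 2 * a * t₂ * t₃ * (1 - ε * u) = ε * g ^ 2)) := by
  have hε2 : ε * ε = 1 := by rcases hε with h | h <;> subst h <;> norm_num
  constructor
  · rintro ⟨hM, hC⟩
    have E : ∀ i j, a*(X i 0 * X 0 j + X i 1 * X 1 j) + b*(Y i 0 * Y 0 j + Y i 1 * Y 1 j)
        = ε * (if i = j then 1 else 0) := by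
      intro i j
      have h := congr_fun (congr_fun hM i) j
      simp only [Matrix.add_apply, Matrix.smul_apply, smul_eq_mul, Matrix.one_apply, pow_two,
        Matrix.mul_apply, Fin.sum_univ_two] at h
      linear_combination h
    have C : ∀ i j, X i 0 * Y 0 j + X i 1 * Y 1 j = Y i 0 * X 0 j + Y i 1 * X 1 j := by
      intro i j
      have h := congr_fun (congr_fun hC i) j
      simp only [Matrix.mul_apply, Fin.sum_univ_two] at h
      linear_combination h
    have e11 : a*(X 0 0 * X 0 0 + X 0 1 * X 1 0) + b*(Y 0 0 * Y 0 0 + Y 0 1 * Y 1 0) = ε := by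
      simpa using E 0 0
    have e12 : a*(X 0 0 * X 0 1 + X 0 1 * X 1 1) + b*(Y 0 0 * Y 0 1 + Y 0 1 * Y 1 1) = 0 := by
      simpa using E 0 1
    have e21 : a*(X 1 0 * X 0 0 + X 1 1 * X 1 0) + b*(Y 1 0 * Y 0 0 + Y 1 1 * Y 1 0) = 0 := by
      simpa using E 1 0
    have e22 : a*(X 1 0 * X 0 1 + X 1 1 * X 1 1) + b*(Y 1 0 * Y 0 1 + Y 1 1 * Y 1 1) = ε := by
      simpa using E 1 1
    have c11 : X 0 1 * Y 1 0 = Y 0 1 * X 1 0 := by linear_combination C 0 0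
    have c12 : X 0 0 * Y 0 1 + X 0 1 * Y 1 1 = Y 0 0 * X 0 1 + Y 0 1 * X 1 1 := C 0 1
    have c21 : X 1 0 * Y 0 0 + X 1 1 * Y 1 0 = Y 1 0 * X 0 0 + Y 1 1 * X 1 0 := C 1 0
    by_cases hsc : X 0 1 = 0 ∧ X 1 0 = 0 ∧ X 0 0 = X 1 1
    · -- X is scalar
      obtain ⟨hx2, hx3, hx14⟩ := hsc
      by_cases hty : Y 0 0 + Y 1 1 = 0
      · right; left
        refine ⟨X 0 0, Y 0 1, Y 1 0, Y 0 0, ?_, ?_, ?_⟩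
        · ext i j
          fin_cases i <;> fin_cases j <;>
            simp [hx2, hx3, ← hx14, Matrix.one_apply]
        · ext i j
          fin_cases i <;> fin_cases j <;>
            simp [Matrix.one_apply]
          omega
        · linear_combination e11 - a * X 1 0 * hx2
      · -- Y is scalar too
        have hy2 : Y 0 1 = 0 := by
          have h0 : b * (Y 0 1 * (Y 0 0 + Y 1 1)) = 0 := by
            linear_combination e12 - (a*(X 0 0 + X 1 1))*hx2
          rcases mul_eq_zero.mp h0 with h | h
          · exact absurd h hb
          · rcases mul_eq_zero.mp h with h | h
            · exact h
            · exact absurd h hty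
        have hy3 : Y 1 0 = 0 := by
          have h0 : b * (Y 1 0 * (Y 0 0 + Y 1 1)) = 0 := by
            linear_combination e21 - (a*(X 0 0 + X 1 1))*hx3
          rcases mul_eq_zero.mp h0 with h | h
          · exact absurd h hb
          · rcases mul_eq_zero.mp h with h | h
            · exact h
            · exact absurd h hty
        have hy14 : Y 0 0 = Y 1 1 := by
          have h0 : b * ((Y 0 0 - Y 1 1) * (Y 0 0 + Y 1 1)) = 0 := by
            linear_combination e11 - e22 - (a*(X 0 0 + X 1 1))*hx14
              - (a*X 1 0)*hx2 + (a*X 0 1)*hx3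
          rcases mul_eq_zero.mp h0 with h | h
          · exact absurd h hb
          · rcases mul_eq_zero.mp h with h | h
            · linarith
            · exact absurd h hty
        left
        refine ⟨X 0 0, Y 0 0, ?_, ?_, ?_⟩
        · ext i j
          fin_cases i <;> fin_cases j <;>
            simp [hx2, hx3, ← hx14, Matrix.one_apply]
        · ext i j
          fin_cases i <;> fin_cases j <;>
            simp [hy2, hy3, ← hy14, Matrix.one_apply]
        · linear_combination e11 - a * X 1 0 * hx2 - b * Y 1 0 * hy2
    · -- X is not scalar
      right; right
      by_cases hoff : X 0 1 = 0 ∧ X 1 0 = 0 ∧ Y 0 1 = 0 ∧ Y 1 0 = 0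
      · -- everything diagonal
        obtain ⟨hx2, hx3, hy2, hy3⟩ := hoff
        have hx14 : X 0 0 ≠ X 1 1 := fun h => hsc ⟨hx2, hx3, h⟩
        have E11' : a*(X 0 0)^2 + b*(Y 0 0)^2 = ε := by
          linear_combination e11 - (a*X 1 0)*hx2 - (b*Y 1 0)*hy2
        have E22' : a*(X 1 1)^2 + b*(Y 1 1)^2 = ε := by
          linear_combination e22 - (a*X 0 1)*hx3 - (b*Y 0 1)*hy3
        obtain ⟨u, hu⟩ : ∃ u : ℤ, u = a*(X 0 0)*(X 1 1) - b*(Y 0 0)*(Y 1 1) := ⟨_, rfl⟩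
        obtain ⟨v, hv⟩ : ∃ v : ℤ, v = (X 0 0)*(Y 1 1) + (X 1 1)*(Y 0 0) := ⟨_, rfl⟩
        have hu2 : u^2 + a*b*v^2 = 1 := by
          linear_combination (u + (a*(X 0 0)*(X 1 1) - b*(Y 0 0)*(Y 1 1)))*hu
            + a*b*(v + ((X 0 0)*(Y 1 1) + (X 1 1)*(Y 0 0)))*hv
            + (a*(X 1 1)^2 + b*(Y 1 1)^2)*E11' + ε*E22' + hε2
        have hx4e : X 1 1 = ε*(u*(X 0 0) + v*b*(Y 0 0)) := by
          linear_combination (-(ε*(X 0 0)))*hu + (-(ε*b*(Y 0 0)))*hv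
            + (-(ε*(X 1 1)))*E11' + (-(X 1 1))*hε2
        have hy4e : Y 1 1 = ε*(v*a*(X 0 0) - u*(Y 0 0)) := by
          linear_combination (-(ε*a*(X 0 0)))*hv + (ε*(Y 0 0))*hu
            + (-(ε*(Y 1 1)))*E11' + (-(Y 1 1))*hε2
        have hune : u ≠ ε := by
          intro h
          subst h
          have hv2 : v^2 = 0 := by
            apply mul_left_cancel₀ (mul_ne_zero ha hb)
            linear_combination hu2 - hε2
          have hv0 : v = 0 := pow_eq_zero_iff two_ne_zero |>.mp hv2
          apply hx14
          rw [hx4e, hv0]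
          linear_combination (-(X 0 0))*hε2
        refine ⟨X 0 0, 0, 0, Y 0 0, u, v, (Int.gcd (v*a) (u-ε) : ℤ), hune, rfl, ?_, ?_, hu2, ?_⟩
        · ext i j
          fin_cases i <;> fin_cases j <;>
            simp [hx2, hx3, ← hx4e]
        · ext i j
          fin_cases i <;> fin_cases j <;>
            simp [hy2, hy3, ← hy4e]
        · linear_combination ((Int.gcd (v*a) (u-ε) : ℤ))^2 * E11'
      · -- some off-diagonal entry is nonzero
        have h23 : (X 0 1 ≠ 0 ∨ Y 0 1 ≠ 0) ∨ (X 1 0 ≠ 0 ∨ Y 1 0 ≠ 0) := by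
          by_contra hcon
          push_neg at hcon
          exact hoff ⟨hcon.1.1, hcon.2.1, hcon.1.2, hcon.2.2⟩
        rcases h23 with h2 | h2
        · obtain ⟨t1, t2, t3, t4, u, v, g, hune, hg, h1, h2', h3', h4', h5', h6', h7', h8',
            hu2, heq⟩ :=
            core a b ε ha hb hnsq hε2 (X 0 0) (X 0 1) (X 1 0) (X 1 1)
              (Y 0 0) (Y 0 1) (Y 1 0) (Y 1 1) hsc h2 e11 e12 c11 c12
          refine ⟨t1, t2, t3, t4, u, v, g, hune, hg, ?_, ?_, hu2, heq⟩
          · ext i j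
            fin_cases i <;> fin_cases j <;> simp [h1, h2', h3', h4']
          · ext i j
            fin_cases i <;> fin_cases j <;> simp [h5', h6', h7', h8']
        · have hsc' : ¬(X 1 0 = 0 ∧ X 0 1 = 0 ∧ X 0 0 = X 1 1) := by tauto
          have e11' : a*(X 0 0 * X 0 0 + X 1 0 * X 0 1) + b*(Y 0 0 * Y 0 0 + Y 1 0 * Y 0 1)
              = ε := by linear_combination e11
          have e21' : a*(X 0 0 * X 1 0 + X 1 0 * X 1 1) + b*(Y 0 0 * Y 1 0 + Y 1 0 * Y 1 1)
              = 0 := by linear_combination e21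
          have c11' : X 1 0 * Y 0 1 = Y 1 0 * X 0 1 := by linear_combination -c11
          have c21' : X 0 0 * Y 1 0 + X 1 0 * Y 1 1 = Y 0 0 * X 1 0 + Y 1 0 * X 1 1 := by
            linear_combination -c21
          obtain ⟨t1, t2, t3, t4, u, v, g, hune, hg, h1, h2', h3', h4', h5', h6', h7', h8',
            hu2, heq⟩ :=
            core a b ε ha hb hnsq hε2 (X 0 0) (X 1 0) (X 0 1) (X 1 1)
              (Y 0 0) (Y 1 0) (Y 0 1) (Y 1 1) hsc' h2 e11' e21' c11' c21'
          refine ⟨t1, t3, t2, t4, u, v, g, hune, hg, ?_, ?_, hu2, by linear_combination heq⟩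
          · ext i j
            fin_cases i <;> fin_cases j <;> simp [h1, h2', h3', h4']
          · ext i j
            fin_cases i <;> fin_cases j <;> simp [h5', h6', h7', h8']
  · rintro (⟨t1, t2, hX, hY, heq⟩ | ⟨t1, t2, t3, t4, hX, hY, heq⟩ |
      ⟨t1, t2, t3, t4, u, v, g, hune, hg, hX, hY, hu2, heq⟩) <;> subst hX <;> subst hY
    · constructor
      · ext i j
        simp only [Matrix.add_apply, Matrix.smul_apply, smul_eq_mul, Matrix.one_apply, pow_two,
          Matrix.mul_apply, Fin.sum_univ_two]
        fin_cases i <;> fin_cases j <;> norm_num [-mul_eq_zero] <;> linear_combination heq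
      · ext i j
        simp only [Matrix.mul_apply, Fin.sum_univ_two, Matrix.smul_apply, smul_eq_mul,
          Matrix.one_apply]
        fin_cases i <;> fin_cases j <;> norm_num [-mul_eq_zero] <;> ring
    · constructor
      · ext i j
        simp only [Matrix.add_apply, Matrix.smul_apply, smul_eq_mul, Matrix.one_apply, pow_two,
          Matrix.mul_apply, Fin.sum_univ_two]
        fin_cases i <;> fin_cases j <;>
          simp only [Matrix.of_apply, Matrix.cons_val', Matrix.cons_val_zero, Matrix.cons_val_one,
            Matrix.head_cons, Matrix.empty_val', Matrix.cons_val_fin_one, Matrix.head_fin_const,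
            Fin.isValue] <;> norm_num [-mul_eq_zero] <;>
          first
          | linear_combination heq
          | ring
      · ext i j
        simp only [Matrix.mul_apply, Fin.sum_univ_two, Matrix.smul_apply, smul_eq_mul,
          Matrix.one_apply]
        fin_cases i <;> fin_cases j <;>
          simp only [Matrix.of_apply, Matrix.cons_val', Matrix.cons_val_zero, Matrix.cons_val_one,
            Matrix.head_cons, Matrix.empty_val', Matrix.cons_val_fin_one, Matrix.head_fin_const,
            Fin.isValue] <;> norm_num [-mul_eq_zero] <;> ring
    · have hsub : u - ε ≠ 0 := sub_ne_zero.mpr hune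
      have hgne : g ≠ 0 := by
        rw [hg]
        simp only [ne_eq, Int.natCast_eq_zero]
        intro hc
        exact hsub (Int.gcd_eq_zero_iff.mp hc).2
      have hk : g * ((u - ε) / g) = u - ε :=
        Int.mul_ediv_cancel' (by rw [hg]; exact Int.gcd_dvd_right _ _)
      have hm : g * (v * a / g) = v * a :=
        Int.mul_ediv_cancel' (by rw [hg]; exact Int.gcd_dvd_left _ _)
      have hd1 : a*(t1*t1 + ((u-ε)/g*t2)*((u-ε)/g*t3)) + b*(t4*t4 + (v*a/g*t2)*(v*a/g*t3)) = ε := by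
        apply mul_left_cancel₀ (pow_ne_zero 2 hgne)
        linear_combination a*t2*t3*(g*((u-ε)/g) + u - ε)*hk + b*t2*t3*(g*(v*a/g) + v*a)*hm + heq + a*t2*t3*hu2 + a*t2*t3*hε2
      have ho1 : a*(t1*((u-ε)/g*t2) + ((u-ε)/g*t2)*(ε*(u*t1+v*b*t4))) + b*(t4*(v*a/g*t2) + (v*a/g*t2)*(ε*(v*a*t1-u*t4))) = 0 := by
        apply mul_left_cancel₀ hgne
        linear_combination a*t2*(t1 + ε*(u*t1+v*b*t4))*hk + b*t2*(t4 + ε*(v*a*t1-u*t4))*hm + (a*t2*t1*ε)*hu2 + (-(a*t2*t1*u) - a*b*t2*t4*v)*hε2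
      have ho2 : a*(t1*((u-ε)/g*t3) + ((u-ε)/g*t3)*(ε*(u*t1+v*b*t4))) + b*(t4*(v*a/g*t3) + (v*a/g*t3)*(ε*(v*a*t1-u*t4))) = 0 := by
        apply mul_left_cancel₀ hgne
        linear_combination a*t3*(t1 + ε*(u*t1+v*b*t4))*hk + b*t3*(t4 + ε*(v*a*t1-u*t4))*hm + (a*t3*t1*ε)*hu2 + (-(a*t3*t1*u) - a*b*t3*t4*v)*hε2
      have hd2 : a*(((u-ε)/g*t3)*((u-ε)/g*t2) + (ε*(u*t1+v*b*t4))*(ε*(u*t1+v*b*t4))) + b*((v*a/g*t3)*(v*a/g*t2) + (ε*(v*a*t1-u*t4))*(ε*(v*a*t1-u*t4))) = ε := by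
        apply mul_left_cancel₀ (pow_ne_zero 2 hgne)
        linear_combination a*t2*t3*(g*((u-ε)/g) + u - ε)*hk + b*t2*t3*(g*(v*a/g) + v*a)*hm + (g^2*ε^2*(a*t1^2+b*t4^2) + a*t2*t3)*hu2 + (g^2*(a*t1^2+b*t4^2) + a*t2*t3)*hε2 + heq
      have hcA : t1*(v*a/g*t2) + ((u-ε)/g*t2)*(ε*(v*a*t1-u*t4)) = t4*((u-ε)/g*t2) + (v*a/g*t2)*(ε*(u*t1+v*b*t4)) := by
        apply mul_left_cancel₀ hgne
        linear_combination t2*(ε*(v*a*t1-u*t4) - t4)*hk + t2*(t1 - ε*(u*t1+v*b*t4))*hm + (-(ε*t4*t2))*hu2 + (u*t4*t2 - v*a*t1*t2)*hε2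
      have hcB : ((u-ε)/g*t3)*t4 + (ε*(u*t1+v*b*t4))*(v*a/g*t3) = (v*a/g*t3)*t1 + (ε*(v*a*t1-u*t4))*((u-ε)/g*t3) := by
        apply mul_left_cancel₀ hgne
        linear_combination t3*(t4 - ε*(v*a*t1-u*t4))*hk + t3*(ε*(u*t1+v*b*t4) - t1)*hm + (ε*t4*t3)*hu2 + (v*a*t1*t3 - u*t4*t3)*hε2
      have hones : (ε • (1 : Matrix (Fin 2) (Fin 2) ℤ)) = !![ε, 0; 0, ε] := by
        ext i j
        fin_cases i <;> fin_cases j <;> simp [Matrix.one_apply]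
      constructor
      · rw [hones]
        ext i j
        simp only [Matrix.add_apply, Matrix.smul_apply, smul_eq_mul, pow_two,
          Matrix.mul_apply, Fin.sum_univ_two]
        fin_cases i <;> fin_cases j <;>
          simp only [Matrix.of_apply, Matrix.cons_val', Matrix.cons_val_zero, Matrix.cons_val_one,
            Matrix.head_cons, Matrix.empty_val', Matrix.cons_val_fin_one, Matrix.head_fin_const,
            Fin.isValue, Fin.zero_eta, Fin.mk_one]
        · linear_combination hd1
        · linear_combination ho1
        · linear_combination ho2
        · linear_combination hd2
      · ext i j
        simp only [Matrix.mul_apply, Fin.sum_univ_two]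
        fin_cases i <;> fin_cases j <;>
          simp only [Matrix.of_apply, Matrix.cons_val', Matrix.cons_val_zero, Matrix.cons_val_one,
            Matrix.head_cons, Matrix.empty_val', Matrix.cons_val_fin_one, Matrix.head_fin_const,
            Fin.isValue, Fin.zero_eta, Fin.mk_one]
        · ring
        · linear_combination hcA
        · linear_combination hcB
        · ring
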